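/- Let N = (n_ij) ∈ SL(2,ℤ) have real eigenvalues α > 1 and 1/α, let p, q, r be integers with r ≠ 0, and set G = G⁺_{N,p,q,r}. Then the center of Γ_G is the infinite cyclic subgroup generated by g₃, and the quotient of Γ_G by its center is a free abelian group of rank two, generated by the classes of g₁ and g₂. -/

import Mathlib

/-- Real Heisenberg group. -/
@[ext] structure Heis where
  x : ℝ
  y : ℝ
  z : ℝ

namespace Heis

instance : Mul Heis := ⟨fun a b => ⟨a.x + b.x, a.y + b.y, a.z + b.z + a.x * b.y⟩⟩
instance : One Heis := ⟨⟨0, 0, 0⟩⟩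
instance : Inv Heis := ⟨fun a => ⟨-a.x, -a.y, -a.z + a.x * a.y⟩⟩

@[simp] lemma mul_x (a b : Heis) : (a * b).x = a.x + b.x := rfl
@[simp] lemma mul_y (a b : Heis) : (a * b).y = a.y + b.y := rfl
@[simp] lemma mul_z (a b : Heis) : (a * b).z = a.z + b.z + a.x * b.y := rfl
@[simp] lemma one_x : (1 : Heis).x = 0 := rfl
@[simp] lemma one_y : (1 : Heis).y = 0 := rfl
@[simp] lemma one_z : (1 : Heis).z = 0 := rfl
@[simp] lemma inv_x (a : Heis) : (a⁻¹).x = -a.x := rfl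
@[simp] lemma inv_y (a : Heis) : (a⁻¹).y = -a.y := rfl
@[simp] lemma inv_z (a : Heis) : (a⁻¹).z = -a.z + a.x * a.y := rfl

instance : Group Heis where
  mul_assoc a b c := by ext <;> simp <;> ring
  one_mul a := by ext <;> simp
  mul_one a := by ext <;> simp
  inv_mul_cancel a := by ext <;> simp <;> ring

lemma X_zpow (t : ℝ) (m : ℤ) : (⟨t, 0, 0⟩ : Heis) ^ m = ⟨m * t, 0, 0⟩ := by
  induction m using Int.induction_on with
  | zero => rw [zpow_zero]; ext <;> simp
  | succ n ih => rw [zpow_add_one, ih]; ext <;> push_cast <;> simp <;> ring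
  | pred n ih => rw [zpow_sub_one, ih]; ext <;> push_cast <;> simp <;> ring

lemma Y_zpow (t : ℝ) (m : ℤ) : (⟨0, t, 0⟩ : Heis) ^ m = ⟨0, m * t, 0⟩ := by
  induction m using Int.induction_on with
  | zero => rw [zpow_zero]; ext <;> simp
  | succ n ih => rw [zpow_add_one, ih]; ext <;> push_cast <;> simp <;> ring
  | pred n ih => rw [zpow_sub_one, ih]; ext <;> push_cast <;> simp <;> ring

lemma Z_zpow (t : ℝ) (m : ℤ) : (⟨0, 0, t⟩ : Heis) ^ m = ⟨0, 0, m * t⟩ := by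
  induction m using Int.induction_on with
  | zero => rw [zpow_zero]; ext <;> simp
  | succ n ih => rw [zpow_add_one, ih]; ext <;> push_cast <;> simp <;> ring
  | pred n ih => rw [zpow_sub_one, ih]; ext <;> push_cast <;> simp <;> ring

end Heis
/-- The automorphism of the Heisenberg group induced by an `SL₂` matrix `[[a,b],[c,d]]`
(acting on the right on row vectors) together with a linear correction `(D,E)`. -/
noncomputable def Heis.theta (a b c d D E : ℝ) (hdet : a * d - b * c = 1) : Heis ≃* Heis where
  toFun v := ⟨a * v.x + c * v.y, b * v.x + d * v.y,
    v.z + a * b / 2 * v.x ^ 2 + c * d / 2 * v.y ^ 2 + b * c * v.x * v.y + D * v.x + E * v.y⟩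
  invFun v := ⟨d * v.x - c * v.y, -b * v.x + a * v.y,
    v.z - d * b / 2 * v.x ^ 2 - c * a / 2 * v.y ^ 2 + b * c * v.x * v.y
      + (-d * D + b * E) * v.x + (c * D - a * E) * v.y⟩
  left_inv v := by
    ext
    · show d * (a * v.x + c * v.y) - c * (b * v.x + d * v.y) = v.x
      linear_combination v.x * hdet
    · show -b * (a * v.x + c * v.y) + a * (b * v.x + d * v.y) = v.y
      linear_combination v.y * hdet
    · show _ = v.z
      dsimp only
      linear_combination (-(a * b / 2 * v.x ^ 2 + c * d / 2 * v.y ^ 2 + b * c * v.x * v.y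
        + D * v.x + E * v.y)) * hdet
  right_inv v := by
    ext
    · show a * (d * v.x - c * v.y) + c * (-b * v.x + a * v.y) = v.x
      linear_combination v.x * hdet
    · show b * (d * v.x - c * v.y) + d * (-b * v.x + a * v.y) = v.y
      linear_combination v.y * hdet
    · show _ = v.z
      dsimp only
      linear_combination (-(- d * b / 2 * v.x ^ 2 - c * a / 2 * v.y ^ 2
        + b * c * v.x * v.y)) * hdet
  map_mul' u v := by
    ext
    · show a * (u.x + v.x) + c * (u.y + v.y) = _
      simp; ring
    · show b * (u.x + v.x) + d * (u.y + v.y) = _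
      simp; ring
    · show _ = _
      simp only [Heis.mul_z, Heis.mul_x, Heis.mul_y]
      linear_combination (- u.x * v.y) * hdet

/-- The relations of the group `G⁺_{N,p,q,r}` attached to an Inoue surface of type `S⁺`:
generators `g₀,g₁,g₂,g₃` (indexed by `Fin 4`) and relations
`g₀g₁g₀⁻¹ = g₁^{n₁₁} g₂^{n₁₂} g₃^{p}`, `g₀g₂g₀⁻¹ = g₁^{n₂₁} g₂^{n₂₂} g₃^{q}`,
`g₁g₂g₁⁻¹g₂⁻¹ = g₃^{r}` and `g₃gᵢ = gᵢg₃` for `i = 0,1,2`. -/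
def gplusRels (N : Matrix (Fin 2) (Fin 2) ℤ) (p q r : ℤ) : Set (FreeGroup (Fin 4)) :=
  { FreeGroup.of 0 * FreeGroup.of 1 * (FreeGroup.of 0)⁻¹ *
      ((FreeGroup.of 1) ^ N 0 0 * (FreeGroup.of 2) ^ N 0 1 * (FreeGroup.of 3) ^ p)⁻¹,
    FreeGroup.of 0 * FreeGroup.of 2 * (FreeGroup.of 0)⁻¹ *
      ((FreeGroup.of 1) ^ N 1 0 * (FreeGroup.of 2) ^ N 1 1 * (FreeGroup.of 3) ^ q)⁻¹,
    FreeGroup.of 1 * FreeGroup.of 2 * (FreeGroup.of 1)⁻¹ * (FreeGroup.of 2)⁻¹ *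
      ((FreeGroup.of 3) ^ r)⁻¹,
    FreeGroup.of 3 * FreeGroup.of 0 * (FreeGroup.of 3)⁻¹ * (FreeGroup.of 0)⁻¹,
    FreeGroup.of 3 * FreeGroup.of 1 * (FreeGroup.of 3)⁻¹ * (FreeGroup.of 1)⁻¹,
    FreeGroup.of 3 * FreeGroup.of 2 * (FreeGroup.of 3)⁻¹ * (FreeGroup.of 2)⁻¹ }

/-- The group `G⁺_{N,p,q,r}`. -/
abbrev Gplus (N : Matrix (Fin 2) (Fin 2) ℤ) (p q r : ℤ) := PresentedGroup (gplusRels N p q r)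


/-- For a group `G`, `GammaSub G` is the normal subgroup
`Γ_G = {g ∈ G : g mod [G,G] is of finite order}`. -/
def GammaSub (G : Type*) [Group G] : Subgroup G :=
  Subgroup.comap (Abelianization.of : G →* Abelianization G)
    (CommGroup.torsion (Abelianization G))

instance GammaSub.normal (G : Type*) [Group G] : (GammaSub G).Normal :=
  Subgroup.Normal.comap inferInstance _



-- chunk C: the target group K and the maps
noncomputable section

namespace InoueAux

open Heis PresentedGroup SemidirectProduct

variable (N : Matrix (Fin 2) (Fin 2) ℤ) (p q r : ℤ)

/-- The real form of `det N = 1`. -/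
abbrev DetR : Prop := (N 0 0 : ℝ) * (N 1 1 : ℝ) - (N 0 1 : ℝ) * (N 1 0 : ℝ) = 1

def thetaN (hd : DetR N) : Heis ≃* Heis :=
  Heis.theta (N 0 0) (N 0 1) (N 1 0) (N 1 1)
    ((N 0 0 : ℝ) * (N 0 1 : ℝ) / 2 + (p : ℝ) / (r : ℝ))
    ((N 1 0 : ℝ) * (N 1 1 : ℝ) / 2 + (q : ℝ) / (r : ℝ)) hd

lemma thetaN_apply (hd : DetR N) (v : Heis) :
    thetaN N p q r hd v =
      ⟨(N 0 0 : ℝ) * v.x + (N 1 0 : ℝ) * v.y, (N 0 1 : ℝ) * v.x + (N 1 1 : ℝ) * v.y,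
        v.z + (N 0 0 : ℝ) * (N 0 1 : ℝ) / 2 * v.x ^ 2 + (N 1 0 : ℝ) * (N 1 1 : ℝ) / 2 * v.y ^ 2
          + (N 0 1 : ℝ) * (N 1 0 : ℝ) * v.x * v.y
          + ((N 0 0 : ℝ) * (N 0 1 : ℝ) / 2 + (p : ℝ) / (r : ℝ)) * v.x
          + ((N 1 0 : ℝ) * (N 1 1 : ℝ) / 2 + (q : ℝ) / (r : ℝ)) * v.y⟩ := rfl

/-- The holomorph of the Heisenberg group, our concrete target. -/
abbrev K := SemidirectProduct Heis (MulAut Heis) (MonoidHom.id (MulAut Heis))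

def phiFun (hd : DetR N) : Fin 4 → K
  | 0 => inr (thetaN N p q r hd)
  | 1 => inl ⟨1, 0, 0⟩
  | 2 => inl ⟨0, 1, 0⟩
  | 3 => inl ⟨0, 0, (r : ℝ)⁻¹⟩

lemma comm_one_of_comm {G : Type*} [Group G] {a b : G} (h : a * b = b * a) :
    a * b * a⁻¹ * b⁻¹ = 1 := by rw [h]; group

lemma phi_rels (hd : DetR N) (hr : r ≠ 0) :
    ∀ w ∈ gplusRels N p q r, FreeGroup.lift (phiFun N p q r hd) w = 1 := by
  have hrR : (r : ℝ) ≠ 0 := Int.cast_ne_zero.mpr hr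
  intro w hw
  rcases hw with rfl | rfl | rfl | rfl | rfl | rfl <;>
    simp only [map_mul, map_inv, map_zpow, FreeGroup.lift_apply_of, phiFun]
  · rw [mul_inv_eq_one, ← map_inv, ← inl_aut, ← map_zpow, ← map_zpow, ← map_zpow,
      ← map_mul, ← map_mul]
    congr 1
    show thetaN N p q r hd _ = _
    rw [X_zpow, Y_zpow, Z_zpow, thetaN_apply]
    ext <;> simp <;> field_simp <;> ring
  · rw [mul_inv_eq_one, ← map_inv, ← inl_aut, ← map_zpow, ← map_zpow, ← map_zpow,
      ← map_mul, ← map_mul]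
    congr 1
    show thetaN N p q r hd _ = _
    rw [X_zpow, Y_zpow, Z_zpow, thetaN_apply]
    ext <;> simp <;> field_simp <;> ring
  · rw [mul_inv_eq_one, ← map_zpow, ← map_inv, ← map_inv, ← map_mul, ← map_mul, ← map_mul]
    congr 1
    rw [Z_zpow]
    ext <;> simp <;> field_simp
  · refine comm_one_of_comm ?_
    have h5 : (MonoidHom.id (MulAut Heis)) (thetaN N p q r hd) (⟨0,0,(r:ℝ)⁻¹⟩ : Heis)
        = (⟨0,0,(r:ℝ)⁻¹⟩ : Heis) := by
      show thetaN N p q r hd _ = _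
      rw [thetaN_apply]; ext <;> simp
    conv_lhs => rw [← h5, inl_aut]
    rw [mul_assoc, ← map_mul, inv_mul_cancel, map_one, mul_one]
  · refine comm_one_of_comm ?_
    rw [← map_mul, ← map_mul]
    congr 1
    ext <;> simp
  · refine comm_one_of_comm ?_
    rw [← map_mul, ← map_mul]
    congr 1
    ext <;> simp

def phiG (hd : DetR N) (hr : r ≠ 0) : Gplus N p q r →* K :=
  PresentedGroup.toGroup (phi_rels N p q r hd hr)

-- chunk D : psi, relations in G, centrality, swap lemmas, normal forms
lemma mul_comm_of_comm_one {G : Type*} [Group G] {a b : G} (h : a * b * a⁻¹ * b⁻¹ = 1) :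
    a * b = b * a := by
  have h2 : a * b * a⁻¹ = b := by
    have := mul_inv_eq_one.mp h
    simpa using this
  calc a * b = (a * b * a⁻¹) * a := by group
  _ = b * a := by rw [h2]

lemma conj_flip {G : Type*} [Group G] {a b c : G} (h : a * b = c * a) : b * a⁻¹ = a⁻¹ * c := by
  calc b * a⁻¹ = a⁻¹ * (a * b) * a⁻¹ := by group
    _ = a⁻¹ * (c * a) * a⁻¹ := by rw [h]
    _ = a⁻¹ * c := by group

def psiFun : Fin 4 → Multiplicative ℤ
  | 0 => Multiplicative.ofAdd 1
  | 1 => 1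
  | 2 => 1
  | 3 => 1

lemma psi_rels : ∀ w ∈ gplusRels N p q r, FreeGroup.lift psiFun w = 1 := by
  intro w hw
  rcases hw with rfl | rfl | rfl | rfl | rfl | rfl <;>
    simp only [map_mul, map_inv, map_zpow, FreeGroup.lift_apply_of, psiFun] <;>
    group

def psiG : Gplus N p q r →* Multiplicative ℤ := PresentedGroup.toGroup (psi_rels N p q r)

local notation "γ₀" => (PresentedGroup.of 0 : Gplus N p q r)
local notation "γ₁" => (PresentedGroup.of 1 : Gplus N p q r)
local notation "γ₂" => (PresentedGroup.of 2 : Gplus N p q r)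
local notation "γ₃" => (PresentedGroup.of 3 : Gplus N p q r)

lemma psiG_of0 : psiG N p q r γ₀ = Multiplicative.ofAdd 1 := PresentedGroup.toGroup.of _
lemma psiG_of1 : psiG N p q r γ₁ = 1 := PresentedGroup.toGroup.of _
lemma psiG_of2 : psiG N p q r γ₂ = 1 := PresentedGroup.toGroup.of _
lemma psiG_of3 : psiG N p q r γ₃ = 1 := PresentedGroup.toGroup.of _

lemma rel_mk {w : FreeGroup (Fin 4)} (hw : w ∈ gplusRels N p q r) :
    PresentedGroup.mk (gplusRels N p q r) w = 1 :=
  (QuotientGroup.eq_one_iff w).mpr (Subgroup.subset_normalClosure hw)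

lemma mk_of (i : Fin 4) :
    PresentedGroup.mk (gplusRels N p q r) (FreeGroup.of i) = PresentedGroup.of i := rfl

lemma relA : γ₀ * γ₁ * γ₀⁻¹ = γ₁ ^ (N 0 0) * γ₂ ^ (N 0 1) * γ₃ ^ p := by
  have h := rel_mk N p q r (Set.mem_insert _ _)
  simp only [map_mul, map_inv, map_zpow, mk_of, mul_inv_eq_one] at h
  exact h

lemma relB : γ₀ * γ₂ * γ₀⁻¹ = γ₁ ^ (N 1 0) * γ₂ ^ (N 1 1) * γ₃ ^ q := by
  have h := rel_mk N p q r (Set.mem_insert_of_mem _ (Set.mem_insert _ _))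
  simp only [map_mul, map_inv, map_zpow, mk_of, mul_inv_eq_one] at h
  exact h

lemma relC : γ₁ * γ₂ * γ₁⁻¹ * γ₂⁻¹ = γ₃ ^ r := by
  have h := rel_mk N p q r
    (Set.mem_insert_of_mem _ (Set.mem_insert_of_mem _ (Set.mem_insert _ _)))
  simp only [map_mul, map_inv, map_zpow, mk_of, mul_inv_eq_one] at h
  exact h

lemma relD : γ₃ * γ₀ = γ₀ * γ₃ := by
  have h := rel_mk N p q r
    (Set.mem_insert_of_mem _ (Set.mem_insert_of_mem _ (Set.mem_insert_of_mem _
      (Set.mem_insert _ _))))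
  simp only [map_mul, map_inv, mk_of] at h
  exact mul_comm_of_comm_one h

lemma relE : γ₃ * γ₁ = γ₁ * γ₃ := by
  have h := rel_mk N p q r
    (Set.mem_insert_of_mem _ (Set.mem_insert_of_mem _ (Set.mem_insert_of_mem _
      (Set.mem_insert_of_mem _ (Set.mem_insert _ _)))))
  simp only [map_mul, map_inv, mk_of] at h
  exact mul_comm_of_comm_one h

lemma relF : γ₃ * γ₂ = γ₂ * γ₃ := by
  have h := rel_mk N p q r
    (Set.mem_insert_of_mem _ (Set.mem_insert_of_mem _ (Set.mem_insert_of_mem _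
      (Set.mem_insert_of_mem _ (Set.mem_insert_of_mem _ rfl)))))
  simp only [map_mul, map_inv, mk_of] at h
  exact mul_comm_of_comm_one h

/-- `g₃` is central. -/
lemma g3_central (x : Gplus N p q r) : γ₃ * x = x * γ₃ := by
  have hx : x ∈ Subgroup.centralizer {(PresentedGroup.of 3 : Gplus N p q r)} := by
    apply PresentedGroup.generated_by
    intro j
    rw [Subgroup.mem_centralizer_iff]
    intro g hg
    rcases hg with rfl
    fin_cases j
    · exact relD N p q r
    · exact relE N p q r
    · exact relF N p q r
    · rfl
  exact Subgroup.mem_centralizer_iff.mp hx _ rfl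

lemma g3p_comm (k : ℤ) (x : Gplus N p q r) : γ₃ ^ k * x = x * γ₃ ^ k := by
  have hc : Commute (PresentedGroup.of 3 : Gplus N p q r) x := g3_central N p q r x
  exact (hc.zpow_left k).eq

lemma g3p_left_comm (k : ℤ) (a b : Gplus N p q r) :
    a * (γ₃ ^ k * b) = γ₃ ^ k * (a * b) := by
  rw [← mul_assoc, ← g3p_comm, mul_assoc]

lemma swap_one : γ₂ * γ₁ = γ₃ ^ (-r) * (γ₁ * γ₂) := by
  rw [zpow_neg, ← relC]; group

lemma swap_m (m : ℤ) : γ₂ * γ₁ ^ m = γ₃ ^ (-r * m) * (γ₁ ^ m * γ₂) := by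
  induction m using Int.induction_on with
  | zero => simp
  | succ n ih =>
    calc γ₂ * γ₁ ^ ((n : ℤ) + 1) = (γ₂ * γ₁ ^ (n : ℤ)) * γ₁ := by rw [zpow_add_one, mul_assoc]
      _ = γ₃ ^ (-r * n) * (γ₁ ^ (n : ℤ) * (γ₂ * γ₁)) := by rw [ih]; group
      _ = γ₃ ^ (-r * n) * (γ₁ ^ (n : ℤ) * (γ₃ ^ (-r) * (γ₁ * γ₂))) := by rw [swap_one]
      _ = γ₃ ^ (-r * n) * (γ₃ ^ (-r) * (γ₁ ^ (n : ℤ) * (γ₁ * γ₂))) := by rw [g3p_left_comm]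
      _ = γ₃ ^ (-r * ((n : ℤ) + 1)) * (γ₁ ^ ((n : ℤ) + 1) * γ₂) := by
          rw [← mul_assoc, ← zpow_add, show -r * (n : ℤ) + -r = -r * ((n : ℤ) + 1) by ring,
            zpow_add_one]
          group
  | pred n ih =>
    have h1 : γ₁ * (γ₃ ^ (-r) * γ₂) = γ₂ * γ₁ := by
      rw [swap_one N p q r, g3p_left_comm]
    have key0 := conj_flip h1
    have key : γ₂ * γ₁⁻¹ = γ₃ ^ r * (γ₁⁻¹ * γ₂) := by
      calc γ₂ * γ₁⁻¹ = γ₃ ^ r * ((γ₃ ^ (-r) * γ₂) * γ₁⁻¹) := by group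
        _ = γ₃ ^ r * (γ₁⁻¹ * γ₂) := by rw [key0]
    calc γ₂ * γ₁ ^ (-(n : ℤ) - 1) = (γ₂ * γ₁ ^ (-(n : ℤ))) * γ₁⁻¹ := by
          rw [zpow_sub_one, mul_assoc]
      _ = γ₃ ^ (-r * (-(n : ℤ))) * (γ₁ ^ (-(n : ℤ)) * (γ₂ * γ₁⁻¹)) := by rw [ih]; group
      _ = γ₃ ^ (-r * (-(n : ℤ))) * (γ₁ ^ (-(n : ℤ)) * (γ₃ ^ r * (γ₁⁻¹ * γ₂))) := by rw [key]
      _ = γ₃ ^ (-r * (-(n : ℤ))) * (γ₃ ^ r * (γ₁ ^ (-(n : ℤ)) * (γ₁⁻¹ * γ₂))) := by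
          rw [g3p_left_comm]
      _ = γ₃ ^ (-r * (-(n : ℤ) - 1)) * (γ₁ ^ (-(n : ℤ) - 1) * γ₂) := by
          rw [← mul_assoc, ← zpow_add,
            show -r * (-(n : ℤ)) + r = -r * (-(n : ℤ) - 1) by ring, zpow_sub_one]
          group

lemma swap_zpow (n m : ℤ) : γ₂ ^ n * γ₁ ^ m = γ₃ ^ (-r * n * m) * (γ₁ ^ m * γ₂ ^ n) := by
  induction n using Int.induction_on with
  | zero => simp
  | succ n ih =>
    calc γ₂ ^ ((n : ℤ) + 1) * γ₁ ^ m = γ₂ ^ (n : ℤ) * (γ₂ * γ₁ ^ m) := by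
          rw [zpow_add_one, mul_assoc]
      _ = γ₂ ^ (n : ℤ) * (γ₃ ^ (-r * m) * (γ₁ ^ m * γ₂)) := by rw [swap_m]
      _ = γ₃ ^ (-r * m) * ((γ₂ ^ (n : ℤ) * γ₁ ^ m) * γ₂) := by rw [g3p_left_comm]; group
      _ = γ₃ ^ (-r * m) * ((γ₃ ^ (-r * n * m) * (γ₁ ^ m * γ₂ ^ (n : ℤ))) * γ₂) := by rw [ih]
      _ = γ₃ ^ (-r * ((n : ℤ) + 1) * m) * (γ₁ ^ m * γ₂ ^ ((n : ℤ) + 1)) := by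
          rw [mul_assoc (γ₃ ^ (-r * n * m)), ← mul_assoc (γ₃ ^ (-r * m)), ← zpow_add,
            show -r * m + -r * n * m = -r * ((n : ℤ) + 1) * m by ring, zpow_add_one]
          group
  | pred n ih =>
    have h1 : γ₂ * (γ₃ ^ (r * m) * γ₁ ^ m) = γ₁ ^ m * γ₂ := by
      rw [g3p_left_comm, swap_m N p q r m, ← mul_assoc, ← zpow_add,
        show (r * m + -r * m : ℤ) = 0 by ring, zpow_zero, one_mul]
    have key0 := conj_flip h1
    have key : γ₂⁻¹ * γ₁ ^ m = γ₃ ^ (r * m) * (γ₁ ^ m * γ₂⁻¹) := by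
      calc γ₂⁻¹ * γ₁ ^ m = (γ₃ ^ (r * m) * γ₁ ^ m) * γ₂⁻¹ := key0.symm
        _ = γ₃ ^ (r * m) * (γ₁ ^ m * γ₂⁻¹) := by group
    calc γ₂ ^ (-(n : ℤ) - 1) * γ₁ ^ m = γ₂ ^ (-(n : ℤ)) * (γ₂⁻¹ * γ₁ ^ m) := by
          rw [zpow_sub_one, mul_assoc]
      _ = γ₂ ^ (-(n : ℤ)) * (γ₃ ^ (r * m) * (γ₁ ^ m * γ₂⁻¹)) := by rw [key]
      _ = γ₃ ^ (r * m) * ((γ₂ ^ (-(n : ℤ)) * γ₁ ^ m) * γ₂⁻¹) := by rw [g3p_left_comm]; group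
      _ = γ₃ ^ (r * m) * ((γ₃ ^ (-r * (-(n : ℤ)) * m) * (γ₁ ^ m * γ₂ ^ (-(n : ℤ)))) * γ₂⁻¹)
            := by rw [ih]
      _ = γ₃ ^ (-r * (-(n : ℤ) - 1) * m) * (γ₁ ^ m * γ₂ ^ (-(n : ℤ) - 1)) := by
          rw [mul_assoc (γ₃ ^ (-r * (-(n : ℤ)) * m)), ← mul_assoc (γ₃ ^ (r * m)), ← zpow_add,
            show r * m + -r * (-(n : ℤ)) * m = -r * (-(n : ℤ) - 1) * m by ring, zpow_sub_one]
          group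

/-- multiplication with central parts. -/
lemma central_mul (X Y : Gplus N p q r) (a b : ℤ) :
    (X * γ₃ ^ a) * (Y * γ₃ ^ b) = (X * Y) * γ₃ ^ (a + b) := by
  calc (X * γ₃ ^ a) * (Y * γ₃ ^ b) = X * (γ₃ ^ a * Y) * γ₃ ^ b := by group
    _ = X * (Y * γ₃ ^ a) * γ₃ ^ b := by rw [g3p_comm]
    _ = (X * Y) * γ₃ ^ (a + b) := by rw [zpow_add]; group

lemma nf_mul12 (m n m' n' : ℤ) :
    (γ₁ ^ m * γ₂ ^ n) * (γ₁ ^ m' * γ₂ ^ n') =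
      (γ₁ ^ (m + m') * γ₂ ^ (n + n')) * γ₃ ^ (-r * n * m') := by
  calc (γ₁ ^ m * γ₂ ^ n) * (γ₁ ^ m' * γ₂ ^ n')
      = γ₁ ^ m * ((γ₂ ^ n * γ₁ ^ m') * γ₂ ^ n') := by group
    _ = γ₁ ^ m * ((γ₃ ^ (-r * n * m') * (γ₁ ^ m' * γ₂ ^ n)) * γ₂ ^ n') := by rw [swap_zpow]
    _ = γ₁ ^ m * (γ₃ ^ (-r * n * m') * ((γ₁ ^ m' * γ₂ ^ n) * γ₂ ^ n')) := by group
    _ = γ₃ ^ (-r * n * m') * (γ₁ ^ m * ((γ₁ ^ m' * γ₂ ^ n) * γ₂ ^ n')) := by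
        rw [g3p_left_comm]
    _ = (γ₁ ^ m * ((γ₁ ^ m' * γ₂ ^ n) * γ₂ ^ n')) * γ₃ ^ (-r * n * m') := by rw [g3p_comm]
    _ = (γ₁ ^ (m + m') * γ₂ ^ (n + n')) * γ₃ ^ (-r * n * m') := by group

/-- Normal form multiplication. -/
lemma nf_mul (m n k m' n' k' : ℤ) :
    (γ₁ ^ m * γ₂ ^ n * γ₃ ^ k) * (γ₁ ^ m' * γ₂ ^ n' * γ₃ ^ k') =
    γ₁ ^ (m + m') * γ₂ ^ (n + n') * γ₃ ^ (k + k' + -r * n * m') := by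
  calc (γ₁ ^ m * γ₂ ^ n * γ₃ ^ k) * (γ₁ ^ m' * γ₂ ^ n' * γ₃ ^ k')
      = ((γ₁ ^ m * γ₂ ^ n) * (γ₁ ^ m' * γ₂ ^ n')) * γ₃ ^ (k + k') := central_mul N p q r _ _ _ _
    _ = ((γ₁ ^ (m + m') * γ₂ ^ (n + n')) * γ₃ ^ (-r * n * m')) * γ₃ ^ (k + k') := by
        rw [nf_mul12]
    _ = γ₁ ^ (m + m') * γ₂ ^ (n + n') * γ₃ ^ (k + k' + -r * n * m') := by
        rw [mul_assoc, ← zpow_add, show (-r * n * m' + (k + k') : ℤ) = k + k' + -r * n * m'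
          by ring]

lemma nf_inv (m n k : ℤ) :
    (γ₁ ^ m * γ₂ ^ n * γ₃ ^ k)⁻¹ = γ₁ ^ (-m) * γ₂ ^ (-n) * γ₃ ^ (-k + -r * n * m) := by
  apply inv_eq_of_mul_eq_one_right
  rw [nf_mul, show (m + -m : ℤ) = 0 by ring, show (n + -n : ℤ) = 0 by ring,
    show (k + (-k + -r * n * m) + -r * n * (-m) : ℤ) = 0 by ring]
  simp

-- chunk E : the subgroup H, phi on normal forms, normality, decomposition
def HH : Subgroup (Gplus N p q r) :=
  Subgroup.closure {PresentedGroup.of 1, PresentedGroup.of 2, PresentedGroup.of 3}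

lemma of1_mem : γ₁ ∈ HH N p q r := Subgroup.subset_closure (by simp)
lemma of2_mem : γ₂ ∈ HH N p q r := Subgroup.subset_closure (by simp)
lemma of3_mem : γ₃ ∈ HH N p q r := Subgroup.subset_closure (by simp)

lemma nf_mem (m n k : ℤ) : γ₁ ^ m * γ₂ ^ n * γ₃ ^ k ∈ HH N p q r :=
  mul_mem (mul_mem (zpow_mem (of1_mem N p q r) m) (zpow_mem (of2_mem N p q r) n))
    (zpow_mem (of3_mem N p q r) k)

lemma mem_nf {x : Gplus N p q r} (hx : x ∈ HH N p q r) :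
    ∃ m n k : ℤ, x = γ₁ ^ m * γ₂ ^ n * γ₃ ^ k := by
  induction hx using Subgroup.closure_induction with
  | mem y hy =>
    rcases hy with rfl | rfl | rfl
    · exact ⟨1, 0, 0, by simp⟩
    · exact ⟨0, 1, 0, by simp⟩
    · exact ⟨0, 0, 1, by simp⟩
  | one => exact ⟨0, 0, 0, by simp⟩
  | mul a b _ _ iha ihb =>
    obtain ⟨m, n, k, rfl⟩ := iha
    obtain ⟨m', n', k', rfl⟩ := ihb
    exact ⟨m + m', n + n', k + k' + -r * n * m', nf_mul N p q r m n k m' n' k'⟩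
  | inv a _ iha =>
    obtain ⟨m, n, k, rfl⟩ := iha
    exact ⟨-m, -n, -k + -r * n * m, nf_inv N p q r m n k⟩

lemma phiG_of0 (hd : DetR N) (hr : r ≠ 0) :
    phiG N p q r hd hr γ₀ = SemidirectProduct.inr (thetaN N p q r hd) :=
  PresentedGroup.toGroup.of _
lemma phiG_of1 (hd : DetR N) (hr : r ≠ 0) :
    phiG N p q r hd hr γ₁ = SemidirectProduct.inl ⟨1, 0, 0⟩ := PresentedGroup.toGroup.of _
lemma phiG_of2 (hd : DetR N) (hr : r ≠ 0) :
    phiG N p q r hd hr γ₂ = SemidirectProduct.inl ⟨0, 1, 0⟩ := PresentedGroup.toGroup.of _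
lemma phiG_of3 (hd : DetR N) (hr : r ≠ 0) :
    phiG N p q r hd hr γ₃ = SemidirectProduct.inl ⟨0, 0, (r : ℝ)⁻¹⟩ :=
  PresentedGroup.toGroup.of _

lemma phi_nf (hd : DetR N) (hr : r ≠ 0) (m n k : ℤ) :
    phiG N p q r hd hr (γ₁ ^ m * γ₂ ^ n * γ₃ ^ k) =
      SemidirectProduct.inl ⟨(m : ℝ), (n : ℝ), (m : ℝ) * (n : ℝ) + (k : ℝ) * (r : ℝ)⁻¹⟩ := by
  rw [map_mul, map_mul, map_zpow, map_zpow, map_zpow, phiG_of1, phiG_of2, phiG_of3]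
  rw [← map_zpow, ← map_zpow, ← map_zpow, ← map_mul, ← map_mul]
  congr 1
  rw [Heis.X_zpow, Heis.Y_zpow, Heis.Z_zpow]
  ext <;> simp

lemma nf_coords (hd : DetR N) (hr : r ≠ 0) {m n k m' n' k' : ℤ}
    (h : (γ₁ ^ m * γ₂ ^ n * γ₃ ^ k : Gplus N p q r) = γ₁ ^ m' * γ₂ ^ n' * γ₃ ^ k') :
    m = m' ∧ n = n' ∧ k = k' := by
  have hrR : (r : ℝ) ≠ 0 := Int.cast_ne_zero.mpr hr
  have h2 := congrArg (phiG N p q r hd hr) h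
  rw [phi_nf, phi_nf] at h2
  have h3 := SemidirectProduct.inl_injective h2
  have hx : (m : ℝ) = m' := congrArg Heis.x h3
  have hy : (n : ℝ) = n' := congrArg Heis.y h3
  have hz := congrArg Heis.z h3
  have hm : m = m' := by exact_mod_cast hx
  have hn : n = n' := by exact_mod_cast hy
  refine ⟨hm, hn, ?_⟩
  simp only at hz
  rw [hx, hy] at hz
  field_simp at hz
  exact_mod_cast add_left_cancel hz

lemma psi_H {x : Gplus N p q r} (hx : x ∈ HH N p q r) : psiG N p q r x = 1 := by
  induction hx using Subgroup.closure_induction with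
  | mem y hy =>
    rcases hy with rfl | rfl | rfl
    · exact psiG_of1 N p q r
    · exact psiG_of2 N p q r
    · exact psiG_of3 N p q r
  | one => simp
  | mul a b _ _ iha ihb => rw [map_mul, iha, ihb, mul_one]
  | inv a _ iha => rw [map_inv, iha, inv_one]

lemma conj0_g3 (k : ℤ) : γ₀ * γ₃ ^ k * γ₀⁻¹ = γ₃ ^ k := by
  have h1 : γ₀ * γ₃ * γ₀⁻¹ = γ₃ := by rw [← relD N p q r]; group
  calc γ₀ * γ₃ ^ k * γ₀⁻¹ = (MulAut.conj γ₀) (γ₃ ^ k) := by rw [MulAut.conj_apply]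
    _ = ((MulAut.conj γ₀) γ₃) ^ k := by rw [map_zpow]
    _ = γ₃ ^ k := by rw [MulAut.conj_apply]; rw [h1]

lemma conj0_mem {x : Gplus N p q r} (hx : x ∈ HH N p q r) :
    γ₀ * x * γ₀⁻¹ ∈ HH N p q r := by
  induction hx using Subgroup.closure_induction with
  | mem y hy =>
    rcases hy with rfl | rfl | rfl
    · rw [relA]; exact nf_mem N p q r _ _ _
    · rw [relB]; exact nf_mem N p q r _ _ _
    · have := conj0_g3 N p q r 1
      rw [zpow_one] at this
      rw [this]; exact of3_mem N p q r
  | one => simpa using one_mem _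
  | mul a b _ _ iha ihb =>
    have : γ₀ * (a * b) * γ₀⁻¹ = (γ₀ * a * γ₀⁻¹) * (γ₀ * b * γ₀⁻¹) := by group
    rw [this]; exact mul_mem iha ihb
  | inv a _ iha =>
    have : γ₀ * a⁻¹ * γ₀⁻¹ = (γ₀ * a * γ₀⁻¹)⁻¹ := by group
    rw [this]; exact inv_mem iha

lemma key1 (hd : DetR N) (hr : r ≠ 0) : ∃ x ∈ HH N p q r, γ₀ * x * γ₀⁻¹ = γ₁ := by
  have hA : (γ₁ ^ (N 1 1) * γ₂ ^ (-(N 0 1)) * γ₃ ^ (0 : ℤ) : Gplus N p q r) ∈ HH N p q r :=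
    nf_mem N p q r _ _ _
  have hP := conj0_mem N p q r hA
  obtain ⟨a, b, c, hc⟩ := mem_nf N p q r hP
  have h2 := congrArg (phiG N p q r hd hr) hc
  rw [map_mul, map_mul, map_inv, phiG_of0, phi_nf, ← map_inv, ← SemidirectProduct.inl_aut,
    phi_nf] at h2
  have h3 := SemidirectProduct.inl_injective h2
  simp only [MonoidHom.id_apply] at h3
  rw [thetaN_apply] at h3
  have hx := congrArg Heis.x h3
  have hy := congrArg Heis.y h3
  simp only at hx hy
  have ha : a = 1 := by
    have : (a : ℝ) = 1 := by rw [← hx]; push_cast; linear_combination hd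
    exact_mod_cast this
  have hb : b = 0 := by
    have : (b : ℝ) = 0 := by rw [← hy]; push_cast; ring
    exact_mod_cast this
  subst ha hb
  refine ⟨γ₁ ^ (N 1 1) * γ₂ ^ (-(N 0 1)) * γ₃ ^ (0 : ℤ) * γ₃ ^ (-c),
    mul_mem hA (zpow_mem (of3_mem N p q r) _), ?_⟩
  calc γ₀ * (γ₁ ^ (N 1 1) * γ₂ ^ (-(N 0 1)) * γ₃ ^ (0 : ℤ) * γ₃ ^ (-c)) * γ₀⁻¹
      = (γ₀ * (γ₁ ^ (N 1 1) * γ₂ ^ (-(N 0 1)) * γ₃ ^ (0 : ℤ)) * γ₀⁻¹) *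
          (γ₀ * γ₃ ^ (-c) * γ₀⁻¹) := by group
    _ = (γ₁ ^ (1 : ℤ) * γ₂ ^ (0 : ℤ) * γ₃ ^ c) * γ₃ ^ (-c) := by rw [hc, conj0_g3]
    _ = γ₁ := by rw [mul_assoc, ← zpow_add]; simp

lemma key2 (hd : DetR N) (hr : r ≠ 0) : ∃ x ∈ HH N p q r, γ₀ * x * γ₀⁻¹ = γ₂ := by
  have hA : (γ₁ ^ (-(N 1 0)) * γ₂ ^ (N 0 0) * γ₃ ^ (0 : ℤ) : Gplus N p q r) ∈ HH N p q r :=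
    nf_mem N p q r _ _ _
  have hP := conj0_mem N p q r hA
  obtain ⟨a, b, c, hc⟩ := mem_nf N p q r hP
  have h2 := congrArg (phiG N p q r hd hr) hc
  rw [map_mul, map_mul, map_inv, phiG_of0, phi_nf, ← map_inv, ← SemidirectProduct.inl_aut,
    phi_nf] at h2
  have h3 := SemidirectProduct.inl_injective h2
  simp only [MonoidHom.id_apply] at h3
  rw [thetaN_apply] at h3
  have hx := congrArg Heis.x h3
  have hy := congrArg Heis.y h3
  simp only at hx hy
  have ha : a = 0 := by
    have : (a : ℝ) = 0 := by rw [← hx]; push_cast; ring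
    exact_mod_cast this
  have hb : b = 1 := by
    have : (b : ℝ) = 1 := by rw [← hy]; push_cast; linear_combination hd
    exact_mod_cast this
  subst ha hb
  refine ⟨γ₁ ^ (-(N 1 0)) * γ₂ ^ (N 0 0) * γ₃ ^ (0 : ℤ) * γ₃ ^ (-c),
    mul_mem hA (zpow_mem (of3_mem N p q r) _), ?_⟩
  calc γ₀ * (γ₁ ^ (-(N 1 0)) * γ₂ ^ (N 0 0) * γ₃ ^ (0 : ℤ) * γ₃ ^ (-c)) * γ₀⁻¹
      = (γ₀ * (γ₁ ^ (-(N 1 0)) * γ₂ ^ (N 0 0) * γ₃ ^ (0 : ℤ)) * γ₀⁻¹) *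
          (γ₀ * γ₃ ^ (-c) * γ₀⁻¹) := by group
    _ = (γ₁ ^ (0 : ℤ) * γ₂ ^ (1 : ℤ) * γ₃ ^ c) * γ₃ ^ (-c) := by rw [hc, conj0_g3]
    _ = γ₂ := by rw [mul_assoc, ← zpow_add]; simp

lemma unconj0_mem (hd : DetR N) (hr : r ≠ 0) {x : Gplus N p q r} (hx : x ∈ HH N p q r) :
    γ₀⁻¹ * x * γ₀ ∈ HH N p q r := by
  induction hx using Subgroup.closure_induction with
  | mem y hy =>
    rcases hy with rfl | rfl | rfl
    · obtain ⟨x, hxH, hx⟩ := key1 N p q r hd hr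
      have : γ₀⁻¹ * γ₁ * γ₀ = x := by rw [← hx]; group
      rw [this]; exact hxH
    · obtain ⟨x, hxH, hx⟩ := key2 N p q r hd hr
      have : γ₀⁻¹ * γ₂ * γ₀ = x := by rw [← hx]; group
      rw [this]; exact hxH
    · have h1 : γ₀⁻¹ * γ₃ * γ₀ = γ₃ := by
        rw [mul_assoc, relD N p q r, ← mul_assoc, inv_mul_cancel, one_mul]
      rw [h1]; exact of3_mem N p q r
  | one => simpa using one_mem _
  | mul a b _ _ iha ihb =>
    have : γ₀⁻¹ * (a * b) * γ₀ = (γ₀⁻¹ * a * γ₀) * (γ₀⁻¹ * b * γ₀) := by group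
    rw [this]; exact mul_mem iha ihb
  | inv a _ iha =>
    have : γ₀⁻¹ * a⁻¹ * γ₀ = (γ₀⁻¹ * a * γ₀)⁻¹ := by group
    rw [this]; exact inv_mem iha

lemma gplus_induction {motive : Gplus N p q r → Prop} (one : motive 1)
    (of : ∀ i, motive (PresentedGroup.of i)) (inv_of : ∀ i, motive ((PresentedGroup.of i)⁻¹))
    (mul : ∀ x y, motive x → motive y → motive (x * y)) : ∀ x, motive x := by
  intro x
  obtain ⟨w, rfl⟩ := PresentedGroup.mk_surjective (gplusRels N p q r) x
  induction w using FreeGroup.induction_on with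
  | C1 => simpa using one
  | of i => exact of i
  | inv_of i _ => rw [map_inv]; exact inv_of i
  | mul a b ha hb => rw [map_mul]; exact mul _ _ ha hb

lemma conj_in_H {g : Gplus N p q r} (hg : g ∈ HH N p q r) :
    (∀ x ∈ HH N p q r, g * x * g⁻¹ ∈ HH N p q r) ∧
    (∀ x ∈ HH N p q r, g⁻¹ * x * g ∈ HH N p q r) :=
  ⟨fun _ hx => mul_mem (mul_mem hg hx) (inv_mem hg),
   fun _ hx => mul_mem (mul_mem (inv_mem hg) hx) hg⟩

lemma conj_mem_all (hd : DetR N) (hr : r ≠ 0) (g : Gplus N p q r) :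
    (∀ x ∈ HH N p q r, g * x * g⁻¹ ∈ HH N p q r) ∧
    (∀ x ∈ HH N p q r, g⁻¹ * x * g ∈ HH N p q r) := by
  induction g using gplus_induction with
  | one => constructor <;> intro x hx <;> simpa using hx
  | of i =>
    fin_cases i
    · exact ⟨fun x hx => conj0_mem N p q r hx, fun x hx => unconj0_mem N p q r hd hr hx⟩
    · exact conj_in_H N p q r (of1_mem N p q r)
    · exact conj_in_H N p q r (of2_mem N p q r)
    · exact conj_in_H N p q r (of3_mem N p q r)
  | inv_of i =>
    fin_cases i
    · constructor <;> intro x hx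
      · exact unconj0_mem N p q r hd hr hx
      · simpa using conj0_mem N p q r hx
    · exact conj_in_H N p q r (inv_mem (of1_mem N p q r))
    · exact conj_in_H N p q r (inv_mem (of2_mem N p q r))
    · exact conj_in_H N p q r (inv_mem (of3_mem N p q r))
  | mul a b ha hb =>
    constructor <;> intro x hx
    · have h : a * b * x * (a * b)⁻¹ = a * (b * x * b⁻¹) * a⁻¹ := by group
      rw [h]; exact ha.1 _ (hb.1 _ hx)
    · have h : (a * b)⁻¹ * x * (a * b) = b⁻¹ * (a⁻¹ * x * a) * b := by group
      rw [h]; exact hb.2 _ (ha.2 _ hx)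

lemma HH_normal (hd : DetR N) (hr : r ≠ 0) : (HH N p q r).Normal :=
  ⟨fun x hx g => (conj_mem_all N p q r hd hr g).1 x hx⟩

lemma decomp (hd : DetR N) (hr : r ≠ 0) (x : Gplus N p q r) :
    ∃ a : ℤ, ∃ h ∈ HH N p q r, x = γ₀ ^ a * h := by
  induction x using gplus_induction with
  | one => exact ⟨0, 1, one_mem _, by simp⟩
  | of i =>
    fin_cases i
    · exact ⟨1, 1, one_mem _, by simp⟩
    · exact ⟨0, γ₁, of1_mem N p q r, by simp⟩
    · exact ⟨0, γ₂, of2_mem N p q r, by simp⟩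
    · exact ⟨0, γ₃, of3_mem N p q r, by simp⟩
  | inv_of i =>
    fin_cases i
    · exact ⟨-1, 1, one_mem _, by simp⟩
    · exact ⟨0, γ₁⁻¹, inv_mem (of1_mem N p q r), by simp⟩
    · exact ⟨0, γ₂⁻¹, inv_mem (of2_mem N p q r), by simp⟩
    · exact ⟨0, γ₃⁻¹, inv_mem (of3_mem N p q r), by simp⟩
  | mul x y hx hy =>
    obtain ⟨a, h, hh, rfl⟩ := hx
    obtain ⟨b, h', hh', rfl⟩ := hy
    refine ⟨a + b, (γ₀ ^ (-b) * h * γ₀ ^ b) * h',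
      mul_mem ?_ hh', by rw [zpow_add]; group⟩
    have := (conj_mem_all N p q r hd hr (γ₀ ^ (-b))).1 h hh
    rwa [show ((γ₀ : Gplus N p q r) ^ (-b))⁻¹ = γ₀ ^ b by rw [zpow_neg, inv_inv]] at this

lemma isOfFinOrder_of_zpow_eq_one {G : Type*} [Group G] {u : G} {s : ℤ} (hs : s ≠ 0)
    (h : u ^ s = 1) : IsOfFinOrder u := by
  apply isOfFinOrder_iff_pow_eq_one.mpr
  refine ⟨s.natAbs, Int.natAbs_pos.mpr hs, ?_⟩
  rcases Int.natAbs_eq s with h1 | h1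
  · rw [← zpow_natCast, ← h1, h]
  · rw [← zpow_natCast, show ((s.natAbs : ℤ)) = -s by omega, zpow_neg, h, inv_one]

lemma ab_conj (g x : Gplus N p q r) :
    (Abelianization.of : Gplus N p q r →* _) (g * x * g⁻¹) = Abelianization.of x := by
  rw [map_mul, map_mul, map_inv, mul_comm (Abelianization.of g) (Abelianization.of x),
    mul_inv_cancel_right]

lemma abE1 : (Abelianization.of (γ₁ : Gplus N p q r)) =
    (Abelianization.of (γ₁ : Gplus N p q r)) ^ (N 0 0) *
      (Abelianization.of (γ₂ : Gplus N p q r)) ^ (N 0 1) *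
      (Abelianization.of (γ₃ : Gplus N p q r)) ^ p := by
  have h := congrArg (Abelianization.of : Gplus N p q r →* _) (relA N p q r)
  rw [ab_conj] at h
  simpa [map_mul, map_zpow] using h

lemma abE2 : (Abelianization.of (γ₂ : Gplus N p q r)) =
    (Abelianization.of (γ₁ : Gplus N p q r)) ^ (N 1 0) *
      (Abelianization.of (γ₂ : Gplus N p q r)) ^ (N 1 1) *
      (Abelianization.of (γ₃ : Gplus N p q r)) ^ q := by
  have h := congrArg (Abelianization.of : Gplus N p q r →* _) (relB N p q r)
  rw [ab_conj] at h
  simpa [map_mul, map_zpow] using h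

lemma abE3 : (Abelianization.of (γ₃ : Gplus N p q r)) ^ r = 1 := by
  have h := congrArg (Abelianization.of : Gplus N p q r →* _) (relC N p q r)
  rw [map_zpow] at h
  rw [← h, map_mul, map_mul, map_mul, map_inv, map_inv,
    mul_comm (Abelianization.of (γ₁ : Gplus N p q r)) (Abelianization.of (γ₂ : Gplus N p q r)),
    mul_inv_cancel_right, mul_inv_cancel]

lemma delta_ne (hN : N.det = 1)
    (hα : ∃ α : ℝ, 1 < α ∧ ((N 0 0 : ℝ) + (N 1 1 : ℝ)) = α + 1 / α) :
    ((N 0 0 - 1) * (N 1 1 - 1) - N 0 1 * N 1 0 : ℤ) ≠ 0 := by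
  obtain ⟨α, h1, h2⟩ := hα
  rw [Matrix.det_fin_two] at hN
  have hα0 : (0 : ℝ) < α := lt_trans one_pos h1
  have h3 : (2 : ℝ) < (N 0 0 : ℝ) + (N 1 1 : ℝ) := by
    rw [h2]
    have h4 : α + 1 / α - 2 = (α - 1) ^ 2 / α := by field_simp; ring
    have h5 : (0 : ℝ) < (α - 1) ^ 2 / α :=
      div_pos (pow_pos (sub_pos.mpr h1) 2) hα0
    linarith
  intro hcontra
  have hz : (N 0 0 : ℤ) + N 1 1 = 2 := by linear_combination (-1 : ℤ) * hcontra + hN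
  have : ((N 0 0 : ℤ) : ℝ) + ((N 1 1 : ℤ) : ℝ) = 2 := by exact_mod_cast hz
  linarith

section torsion

lemma u_torsion (hN : N.det = 1)
    (hα : ∃ α : ℝ, 1 < α ∧ ((N 0 0 : ℝ) + (N 1 1 : ℝ)) = α + 1 / α) (hr : r ≠ 0) :
    IsOfFinOrder (Abelianization.of (γ₁ : Gplus N p q r)) := by
  set u := Additive.ofMul (Abelianization.of (γ₁ : Gplus N p q r)) with hu
  set v := Additive.ofMul (Abelianization.of (γ₂ : Gplus N p q r)) with hv
  set w := Additive.ofMul (Abelianization.of (γ₃ : Gplus N p q r)) with hw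
  have E1 : u = (N 0 0) • u + (N 0 1) • v + p • w := by
    have := congrArg Additive.ofMul (abE1 N p q r)
    simpa [ofMul_mul, ofMul_zpow] using this
  have E2 : v = (N 1 0) • u + (N 1 1) • v + q • w := by
    have := congrArg Additive.ofMul (abE2 N p q r)
    simpa [ofMul_mul, ofMul_zpow] using this
  have E3 : r • w = 0 := by
    have := congrArg Additive.ofMul (abE3 N p q r)
    simpa [ofMul_zpow] using this
  set δ : ℤ := (N 0 0 - 1) * (N 1 1 - 1) - N 0 1 * N 1 0 with hδ
  have key : (r * δ) • u =
      (-(r * (N 1 1 - 1))) • (u - ((N 0 0) • u + (N 0 1) • v + p • w))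
      + (r * (N 0 1)) • (v - ((N 1 0) • u + (N 1 1) • v + q • w))
      + (-(p * (N 1 1 - 1) - q * (N 0 1))) • (r • w) := by
    rw [hδ]; module
  rw [← E1, ← E2, sub_self, sub_self, smul_zero, smul_zero, E3, smul_zero] at key
  simp only [add_zero, zero_add] at key
  have hz : (Abelianization.of (γ₁ : Gplus N p q r)) ^ (r * δ) = 1 := by
    rw [← ofMul_eq_zero, ofMul_zpow]; exact key
  exact isOfFinOrder_of_zpow_eq_one (mul_ne_zero hr (delta_ne N hN hα)) hz

lemma v_torsion (hN : N.det = 1)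
    (hα : ∃ α : ℝ, 1 < α ∧ ((N 0 0 : ℝ) + (N 1 1 : ℝ)) = α + 1 / α) (hr : r ≠ 0) :
    IsOfFinOrder (Abelianization.of (γ₂ : Gplus N p q r)) := by
  set u := Additive.ofMul (Abelianization.of (γ₁ : Gplus N p q r)) with hu
  set v := Additive.ofMul (Abelianization.of (γ₂ : Gplus N p q r)) with hv
  set w := Additive.ofMul (Abelianization.of (γ₃ : Gplus N p q r)) with hw
  have E1 : u = (N 0 0) • u + (N 0 1) • v + p • w := by
    have := congrArg Additive.ofMul (abE1 N p q r)
    simpa [ofMul_mul, ofMul_zpow] using this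
  have E2 : v = (N 1 0) • u + (N 1 1) • v + q • w := by
    have := congrArg Additive.ofMul (abE2 N p q r)
    simpa [ofMul_mul, ofMul_zpow] using this
  have E3 : r • w = 0 := by
    have := congrArg Additive.ofMul (abE3 N p q r)
    simpa [ofMul_zpow] using this
  set δ : ℤ := (N 0 0 - 1) * (N 1 1 - 1) - N 0 1 * N 1 0 with hδ
  have key : (r * δ) • v =
      (r * (N 1 0)) • (u - ((N 0 0) • u + (N 0 1) • v + p • w))
      + (-(r * (N 0 0 - 1))) • (v - ((N 1 0) • u + (N 1 1) • v + q • w))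
      + (-(q * (N 0 0 - 1) - p * (N 1 0))) • (r • w) := by
    rw [hδ]; module
  rw [← E1, ← E2, sub_self, sub_self, smul_zero, smul_zero, E3, smul_zero] at key
  simp only [add_zero, zero_add] at key
  have hz : (Abelianization.of (γ₂ : Gplus N p q r)) ^ (r * δ) = 1 := by
    rw [← ofMul_eq_zero, ofMul_zpow]; exact key
  exact isOfFinOrder_of_zpow_eq_one (mul_ne_zero hr (delta_ne N hN hα)) hz

lemma w_torsion (hr : r ≠ 0) :
    IsOfFinOrder (Abelianization.of (γ₃ : Gplus N p q r)) :=
  isOfFinOrder_of_zpow_eq_one hr (abE3 N p q r)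

end torsion

lemma mem_gammaSub_iff {G : Type*} [Group G] {x : G} :
    x ∈ GammaSub G ↔ IsOfFinOrder (Abelianization.of x) := Iff.rfl

/-- `Γ_G = H`. -/
lemma gamma_eq (hd : DetR N) (hN : N.det = 1)
    (hα : ∃ α : ℝ, 1 < α ∧ ((N 0 0 : ℝ) + (N 1 1 : ℝ)) = α + 1 / α) (hr : r ≠ 0)
    (x : Gplus N p q r) : x ∈ GammaSub (Gplus N p q r) ↔ x ∈ HH N p q r := by
  constructor
  · intro hx
    have hfin : IsOfFinOrder (Abelianization.of x) := mem_gammaSub_iff.mp hx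
    obtain ⟨a, h, hh, rfl⟩ := decomp N p q r hd hr x
    have hpsi : psiG N p q r (γ₀ ^ a * h) = Multiplicative.ofAdd a := by
      rw [map_mul, map_zpow, psiG_of0, psi_H N p q r hh, mul_one, ← ofAdd_zsmul]
      norm_num
    have hfin2 : IsOfFinOrder (psiG N p q r (γ₀ ^ a * h)) := by
      have heq : psiG N p q r (γ₀ ^ a * h) =
          Abelianization.lift (psiG N p q r) (Abelianization.of (γ₀ ^ a * h)) :=
        (Abelianization.lift_apply_of _ _).symm
      rw [heq]
      exact (Abelianization.lift (psiG N p q r)).isOfFinOrder hfin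
    rw [hpsi] at hfin2
    obtain ⟨n, hn, hpow⟩ := isOfFinOrder_iff_pow_eq_one.mp hfin2
    rw [← ofAdd_nsmul, ofAdd_eq_one] at hpow
    have ha : a = 0 := by
      have : (n : ℤ) * a = 0 := by rwa [nsmul_eq_mul] at hpow
      rcases mul_eq_zero.mp this with h' | h'
      · exact absurd (by exact_mod_cast h' : n = 0) hn.ne'
      · exact h'
    rw [ha, zpow_zero, one_mul]
    exact hh
  · intro hx
    obtain ⟨m, n, k, rfl⟩ := mem_nf N p q r hx
    rw [mem_gammaSub_iff, ← CommGroup.mem_torsion, map_mul, map_mul, map_zpow, map_zpow,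
      map_zpow]
    exact mul_mem (mul_mem (zpow_mem ((CommGroup.mem_torsion _).mpr
      (u_torsion N p q r hN hα hr)) m) (zpow_mem ((CommGroup.mem_torsion _).mpr
      (v_torsion N p q r hN hα hr)) n)) (zpow_mem ((CommGroup.mem_torsion _).mpr
      (w_torsion N p q r hr)) k)

lemma center_char (hd : DetR N) (hN : N.det = 1)
    (hα : ∃ α : ℝ, 1 < α ∧ ((N 0 0 : ℝ) + (N 1 1 : ℝ)) = α + 1 / α) (hr : r ≠ 0)
    (x : Gplus N p q r) :
    (x ∈ GammaSub (Gplus N p q r) ∧ ∀ y ∈ GammaSub (Gplus N p q r), x * y = y * x) ↔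
      ∃ k : ℤ, x = γ₃ ^ k := by
  constructor
  · rintro ⟨hx, hcomm⟩
    obtain ⟨m, n, k, rfl⟩ := mem_nf N p q r ((gamma_eq N p q r hd hN hα hr _).mp hx)
    have hg1 : (γ₁ : Gplus N p q r) ∈ GammaSub (Gplus N p q r) :=
      (gamma_eq N p q r hd hN hα hr _).mpr (of1_mem N p q r)
    have hg2 : (γ₂ : Gplus N p q r) ∈ GammaSub (Gplus N p q r) :=
      (gamma_eq N p q r hd hN hα hr _).mpr (of2_mem N p q r)
    have e1 := hcomm γ₁ hg1
    have e2 := hcomm γ₂ hg2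
    have hg1' : (γ₁ ^ (1 : ℤ) * γ₂ ^ (0 : ℤ) * γ₃ ^ (0 : ℤ) : Gplus N p q r) = γ₁ := by simp
    have hg2' : (γ₁ ^ (0 : ℤ) * γ₂ ^ (1 : ℤ) * γ₃ ^ (0 : ℤ) : Gplus N p q r) = γ₂ := by simp
    have e1' : (γ₁ ^ (m + 1) * γ₂ ^ (n + 0) * γ₃ ^ (k + 0 + -r * n * 1) : Gplus N p q r) =
        γ₁ ^ (1 + m) * γ₂ ^ (0 + n) * γ₃ ^ (0 + k + -r * 0 * m) := by
      rw [← nf_mul, ← nf_mul, hg1']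
      exact e1
    have e2' : (γ₁ ^ (m + 0) * γ₂ ^ (n + 1) * γ₃ ^ (k + 0 + -r * n * 0) : Gplus N p q r) =
        γ₁ ^ (0 + m) * γ₂ ^ (1 + n) * γ₃ ^ (0 + k + -r * 1 * m) := by
      rw [← nf_mul, ← nf_mul, hg2']
      exact e2
    have c1 := (nf_coords N p q r hd hr e1').2.2
    have c2 := (nf_coords N p q r hd hr e2').2.2
    have hn : n = 0 := by
      have h5 : r * n = 0 := by linear_combination -c1
      rcases mul_eq_zero.mp h5 with h' | h'
      · exact absurd h' hr
      · exact h'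
    have hm : m = 0 := by
      have h5 : r * m = 0 := by linear_combination c2
      rcases mul_eq_zero.mp h5 with h' | h'
      · exact absurd h' hr
      · exact h'
    exact ⟨k, by rw [hm, hn]; simp⟩
  · rintro ⟨k, rfl⟩
    refine ⟨(gamma_eq N p q r hd hN hα hr _).mpr (zpow_mem (of3_mem N p q r) k), ?_⟩
    intro y _
    exact g3p_comm N p q r k y

lemma g3_infinite (hd : DetR N) (hr : r ≠ 0) :
    ¬ IsOfFinOrder (γ₃ : Gplus N p q r) := by
  intro h
  obtain ⟨nn, hnn, hpow⟩ := isOfFinOrder_iff_pow_eq_one.mp h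
  have h2 : (γ₃ : Gplus N p q r) ^ ((nn : ℤ)) = 1 := by rw [zpow_natCast, hpow]
  have h3 : (γ₁ : Gplus N p q r) ^ (0 : ℤ) * γ₂ ^ (0 : ℤ) * γ₃ ^ ((nn : ℤ)) =
      γ₁ ^ (0 : ℤ) * γ₂ ^ (0 : ℤ) * γ₃ ^ (0 : ℤ) := by simp [h2]
  have c := (nf_coords N p q r hd hr h3).2.2
  omega

end InoueAux

/-- For `G = G⁺_{N,p,q,r}`, the center of `Γ_G` is the infinite cyclic subgroup generated
by `g₃`, and the quotient of `Γ_G` by its center is free abelian of rank two, generated by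
the classes of `g₁` and `g₂`. -/
theorem stmt_3 (N : Matrix (Fin 2) (Fin 2) ℤ) (hN : N.det = 1)
    (hα : ∃ α : ℝ, 1 < α ∧ ((N 0 0 : ℝ) + (N 1 1 : ℝ)) = α + 1 / α)
    (p q r : ℤ) (hr : r ≠ 0) :
    -- the center of `Γ_G` is the infinite cyclic subgroup generated by `g₃`:
    (∀ x : Gplus N p q r,
      (x ∈ GammaSub (Gplus N p q r) ∧ ∀ y ∈ GammaSub (Gplus N p q r), x * y = y * x) ↔
        ∃ n : ℤ, x = (PresentedGroup.of 3 : Gplus N p q r) ^ n) ∧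
    ¬ IsOfFinOrder (PresentedGroup.of 3 : Gplus N p q r) ∧
    -- the quotient of `Γ_G` by its center is free abelian of rank two, generated by
    -- the classes of `g₁` and `g₂`:
    (∀ x ∈ GammaSub (Gplus N p q r), ∃ m n : ℤ, ∃ z : Gplus N p q r,
      (z ∈ GammaSub (Gplus N p q r) ∧ ∀ y ∈ GammaSub (Gplus N p q r), z * y = y * z) ∧
      x = (PresentedGroup.of 1 : Gplus N p q r) ^ m * PresentedGroup.of 2 ^ n * z) ∧
    (∀ m n : ℤ,
      ((PresentedGroup.of 1 : Gplus N p q r) ^ m * PresentedGroup.of 2 ^ n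
          ∈ GammaSub (Gplus N p q r) ∧
        ∀ y ∈ GammaSub (Gplus N p q r),
          ((PresentedGroup.of 1 : Gplus N p q r) ^ m * PresentedGroup.of 2 ^ n) * y =
            y * ((PresentedGroup.of 1 : Gplus N p q r) ^ m * PresentedGroup.of 2 ^ n)) →
      m = 0 ∧ n = 0) := by
  have hd : InoueAux.DetR N := by
    rw [Matrix.det_fin_two] at hN
    have : ((N 0 0 * N 1 1 - N 0 1 * N 1 0 : ℤ) : ℝ) = 1 := by exact_mod_cast hN
    push_cast at this
    exact this
  have hN' : N.det = 1 := by rw [Matrix.det_fin_two] at hN ⊢; exact hN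
  refine ⟨fun x => InoueAux.center_char N p q r hd hN' hα hr x, ?_, ?_, ?_⟩
  · exact InoueAux.g3_infinite N p q r hd hr
  · intro x hx
    obtain ⟨m, n, k, rfl⟩ :=
      InoueAux.mem_nf N p q r ((InoueAux.gamma_eq N p q r hd hN' hα hr _).mp hx)
    refine ⟨m, n, PresentedGroup.of 3 ^ k,
      ⟨(InoueAux.gamma_eq N p q r hd hN' hα hr _).mpr
        (zpow_mem (InoueAux.of3_mem N p q r) k),
       fun y _ => InoueAux.g3p_comm N p q r k y⟩, rfl⟩
  · intro m n hcen
    obtain ⟨k, he⟩ := (InoueAux.center_char N p q r hd hN' hα hr _).mp hcen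
    have h1 : (PresentedGroup.of 1 : Gplus N p q r) ^ m * PresentedGroup.of 2 ^ n *
        PresentedGroup.of 3 ^ (0 : ℤ) =
        (PresentedGroup.of 1 : Gplus N p q r) ^ (0 : ℤ) * PresentedGroup.of 2 ^ (0 : ℤ) *
          PresentedGroup.of 3 ^ k := by
      simpa using he
    have c := InoueAux.nf_coords N p q r hd hr h1
    exact ⟨c.1, c.2.1⟩
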